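/- The tail 1 − F_{β,p} is not regularly varying at x = 1: there exists x > 0 such that the limit as h → 0⁺ of (1 − F_{β,p}(1 − xh)) / (1 − F_{β,p}(1 − h)) does not exist, provided log β / log q is irrational or ν_{β,q} is non-constant. -/

import Mathlib

open Filter Real Set Topology

theorem stmt19 (β p q : ℝ) (hβ0 : 0 < β) (hβ : β ≤ 1/2)
    (hp0 : 0 < p) (hp1 : p < 1) (hq : q = 1 - p)
    (hne : ¬(β = 1/2 ∧ p = 1/2))
    (F ν : ℝ → ℝ) (hmono : Monotone F)
    (hrc : ∀ x : ℝ, ContinuousWithinAt F (Set.Ici x) x)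
    (hbot : Filter.Tendsto F Filter.atBot (nhds 0))
    (htop : Filter.Tendsto F Filter.atTop (nhds 1))
    (hF : ∀ x : ℝ, F x = p * F (x / β) + q * F (x / β + 1 - 1 / β))
    (hνpos : ∀ t : ℝ, 0 < ν t) (hνbdd : ∃ M : ℝ, ∀ t : ℝ, ν t ≤ M)
    (hνper : ∀ t : ℝ, ν (t + |Real.log β|) = ν t)
    (hrep : ∀ y : ℝ, 0 < y → y ≤ 1 →
      1 - F (1 - y) = y ^ (Real.log q / Real.log β) * ν (Real.log y))
    (hprov : Irrational (Real.log β / Real.log q) ∨ ∃ s t : ℝ, ν s ≠ ν t) :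
    ∃ x : ℝ, 0 < x ∧
      ¬ ∃ L : ℝ, Filter.Tendsto
        (fun h : ℝ => (1 - F (1 - x * h)) / (1 - F (1 - h)))
        (nhdsWithin 0 (Set.Ioi 0)) (nhds L) := by
  set α := Real.log q / Real.log β with hα_def
  have hβ1 : β < 1 := lt_of_le_of_lt hβ (by norm_num)
  have hq0 : 0 < q := by rw [hq]; linarith
  have hq1 : q < 1 := by rw [hq]; linarith
  have hlogβ : Real.log β < 0 := Real.log_neg hβ0 hβ1
  have hlogq : Real.log q < 0 := Real.log_neg hq0 hq1
  have hα : 0 < α := div_pos_of_neg_of_neg hlogq hlogβ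
  have hpq : p + q = 1 := by rw [hq]; ring
  -- Step 1 : F vanishes on nonpositive reals
  have hFstep : ∀ x : ℝ, x ≤ 0 → F x = F (x / β) := by
    intro x hx
    have h1 : x / β + 1 - 1 / β ≤ x / β := by
      have : 1 ≤ 1 / β := one_le_one_div hβ0 (le_of_lt hβ1)
      linarith
    have h2 : x / β ≤ x := by
      rw [div_le_iff₀ hβ0]
      nlinarith
    have hle : F x ≤ F (x / β) := by
      calc F x = p * F (x / β) + q * F (x / β + 1 - 1 / β) := hF x
        _ ≤ p * F (x / β) + q * F (x / β) := by
            have := hmono h1; nlinarith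
        _ = F (x / β) := by linear_combination F (x / β) * hpq
    exact le_antisymm hle (hmono h2)
  have hFneg : ∀ x : ℝ, x < 0 → F x = 0 := by
    intro x hx
    have hiter : ∀ n : ℕ, F x = F (x / β ^ n) := by
      intro n
      induction n with
      | zero => simp
      | succ n ih =>
        rw [ih, hFstep (x / β ^ n)
          (le_of_lt (div_neg_of_neg_of_pos hx (by positivity))), div_div, ← pow_succ]
    have htend : Tendsto (fun n : ℕ => x / β ^ n) atTop atBot := by
      have h1 : Tendsto (fun n : ℕ => (1/β) ^ n) atTop atTop :=
        tendsto_pow_atTop_atTop_of_one_lt ((one_lt_one_div hβ0 hβ1))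
      have h2 : Tendsto (fun n : ℕ => (-x) * (1/β) ^ n) atTop atTop :=
        h1.const_mul_atTop (by linarith)
      have h3 : Tendsto (fun n : ℕ => -((-x) * (1/β) ^ n)) atTop atBot :=
        tendsto_neg_atTop_atBot.comp h2
      refine h3.congr (fun n => ?_)
      field_simp
      rw [mul_assoc, ← mul_pow, one_div_mul_cancel (ne_of_gt hβ0), one_pow, mul_one]
    have : Tendsto (fun n : ℕ => F (x / β ^ n)) atTop (nhds 0) :=
      hbot.comp htend
    have hconst : Tendsto (fun n : ℕ => F (x / β ^ n)) atTop (nhds (F x)) := by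
      refine tendsto_const_nhds.congr (fun n => (hiter n))
    exact tendsto_nhds_unique hconst this
  have hF0 : F 0 = 0 := by
    have h := hF 0
    have harg : (0:ℝ) / β + 1 - 1 / β < 0 := by
      have h1 : 1 < 1 / β := one_lt_one_div hβ0 hβ1
      simp only [zero_div]; linarith
    rw [hFneg _ harg, zero_div] at h
    have h2 : F 0 * (1 - p) = 0 := by linarith
    rcases mul_eq_zero.mp h2 with h3 | h3
    · exact h3
    · linarith
  have hFnonpos : ∀ x : ℝ, x ≤ 0 → F x = 0 := by
    intro x hx
    rcases lt_or_eq_of_le hx with h | h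
    · exact hFneg x h
    · rw [h, hF0]
  have hν0 : ν 0 = 1 := by
    have h := hrep 1 one_pos le_rfl
    simp [hF0] at h
    linarith
  -- Step 2 : ν is non-constant
  have hβle : β ≤ 1 - β := by linarith
  have hnc : ∃ s t : ℝ, ν s ≠ ν t := by
    by_contra hcst
    push_neg at hcst
    have hcν : ∀ t : ℝ, ν t = 1 := fun t => (hcst t 0).trans hν0
    have hid : ∀ x : ℝ, x ∈ Ioo (0:ℝ) β →
        (1 - x) ^ α = q + p * (1 - x / β) ^ α := by
      intro x ⟨hx0, hxβ⟩
      have h1 : F x = 1 - (1 - x) ^ α := by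
        have := hrep (1 - x) (by linarith) (by linarith)
        rw [hcν] at this
        have e : 1 - (1-x) = x := by ring
        rw [e] at this; linarith
      have h2 : F (x / β) = 1 - (1 - x / β) ^ α := by
        have hxb0 : 0 < x / β := div_pos hx0 hβ0
        have hxb1 : x / β < 1 := (div_lt_one hβ0).mpr hxβ
        have := hrep (1 - x / β) (by linarith) (by linarith)
        rw [hcν] at this
        have e : 1 - (1 - x/β) = x/β := by ring
        rw [e] at this; linarith
      have h3 : F (x / β + 1 - 1 / β) = 0 := by
        apply hFnonpos
        have : x / β + 1 - 1 / β = (x - (1 - β)) / β := by field_simp; ring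
        rw [this]
        apply div_nonpos_of_nonpos_of_nonneg _ (le_of_lt hβ0)
        linarith
      have h := hF x
      rw [h1, h2, h3] at h
      have : (1 - x) ^ α = 1 - p + p * (1 - x/β) ^ α := by nlinarith
      rw [hq]; linarith
    -- left limit at β gives (1-β)^α = q
    have hlim : (1 - β) ^ α = q := by
      have hmem : Ioo (0:ℝ) β ∈ 𝓝[<] β := by
        have := inter_mem_nhdsWithin (Iio β) (Ioi_mem_nhds hβ0)
        rwa [Set.inter_comm, Set.Ioi_inter_Iio] at this
      have t1 : Tendsto (fun x : ℝ => (1 - x) ^ α) (𝓝[<] β) (𝓝 ((1 - β) ^ α)) := by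
        have hc : ContinuousAt (fun x : ℝ => (1 - x) ^ α) β := by
          apply ContinuousAt.rpow_const
          · exact (continuous_const.sub continuous_id).continuousAt
          · left; intro h; linarith [show 1 - β = 0 from h]
        exact hc.continuousWithinAt.tendsto
      have t2 : Tendsto (fun x : ℝ => q + p * (1 - x / β) ^ α) (𝓝[<] β)
          (𝓝 (q + p * (0:ℝ) ^ α)) := by
        have hc0 : ContinuousAt (fun y : ℝ => y ^ α) 0 :=
          Real.continuousAt_rpow_const 0 α (Or.inr (le_of_lt hα))
        have hb : Tendsto (fun x : ℝ => 1 - x / β) (𝓝[<] β) (𝓝 0) := by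
          have : ContinuousAt (fun x : ℝ => 1 - x / β) β :=
            (continuous_const.sub (continuous_id.div_const β)).continuousAt
          have h := this.continuousWithinAt.tendsto (s := Iio β)
          have e : 1 - β / β = 0 := by field_simp; norm_num
          rwa [e] at h
        exact (tendsto_const_nhds.add ((hc0.tendsto.comp hb).const_mul p))
      have heq : (fun x : ℝ => (1 - x) ^ α) =ᶠ[𝓝[<] β]
          (fun x : ℝ => q + p * (1 - x / β) ^ α) :=
        eventually_of_mem hmem (fun x hx => hid x hx)
      have := tendsto_nhds_unique (t1.congr' heq) t2
      rw [Real.zero_rpow (ne_of_gt hα)] at this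
      linarith
    -- from (1-β)^α = q deduce β = 1/2
    have hβhalf : β = 1/2 := by
      have h1 : α * Real.log (1 - β) = Real.log q := by
        rw [← Real.log_rpow (by linarith : (0:ℝ) < 1 - β), hlim]
      have h2 : α * Real.log β = Real.log q := by
        rw [hα_def, div_mul_cancel₀ _ (ne_of_lt hlogβ)]
      have h5 : α * (Real.log (1 - β) - Real.log β) = 0 := by linear_combination h1 - h2
      have h3 : Real.log (1 - β) = Real.log β := by
        rcases mul_eq_zero.mp h5 with h6 | h6
        · exact absurd h6 (ne_of_gt hα)
        · linarith
      have h4 : (1 : ℝ) - β = β :=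
        Real.log_injOn_pos (Set.mem_Ioi.mpr (by linarith))
          (Set.mem_Ioi.mpr hβ0) h3
      linarith
    -- derivative at 0 gives p = 1/2
    have hphalf : p = 1/2 := by
      have din1 : HasDerivAt (fun x : ℝ => 1 - x) (-1) 0 := by
        simpa using (hasDerivAt_id (0:ℝ)).const_sub 1
      have din2 : HasDerivAt (fun x : ℝ => 1 - x / β) (-(1/β)) 0 := by
        simpa [one_div] using ((hasDerivAt_id (0:ℝ)).div_const β).const_sub 1
      have d1 : HasDerivAt (fun x : ℝ => (1 - x) ^ α) (-α) 0 := by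
        have h := din1.rpow_const (p := α) (Or.inl (by norm_num))
        convert h using 1
        norm_num [Real.one_rpow]
      have d2 : HasDerivAt (fun x : ℝ => (1 - x / β) ^ α) (-(α / β)) 0 := by
        have h := din2.rpow_const (p := α) (Or.inl (by norm_num))
        convert h using 1
        simp [Real.one_rpow]
        ring
      have dG : HasDerivAt (fun x : ℝ => (1 - x) ^ α - q - p * (1 - x / β) ^ α)
          (-α - p * (-(α / β))) 0 := (d1.sub_const q).sub (d2.const_mul p)
      have hW1 : HasDerivWithinAt
          (fun x : ℝ => (1 - x) ^ α - q - p * (1 - x / β) ^ α)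
          (-α - p * (-(α / β))) (Ioi 0) 0 := dG.hasDerivWithinAt
      have hmem0 : Ioo (0:ℝ) β ∈ 𝓝[>] (0:ℝ) := by
        have := inter_mem_nhdsWithin (Ioi (0:ℝ)) (Iio_mem_nhds hβ0)
        rwa [Set.Ioi_inter_Iio] at this
      have heq0 : (fun _ : ℝ => (0:ℝ)) =ᶠ[𝓝[>] (0:ℝ)]
          (fun x : ℝ => (1 - x) ^ α - q - p * (1 - x / β) ^ α) := by
        refine eventually_of_mem hmem0 (fun x hx => ?_)
        have := hid x hx
        linarith
      have hG0 : (0:ℝ) = (1 - (0:ℝ)) ^ α - q - p * (1 - (0:ℝ) / β) ^ α := by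
        norm_num [Real.one_rpow]
        linarith
      have hW2 : HasDerivWithinAt (fun _ : ℝ => (0:ℝ))
          (-α - p * (-(α / β))) (Ioi 0) 0 :=
        hW1.congr_of_eventuallyEq heq0 hG0
      have hW3 : HasDerivWithinAt (fun _ : ℝ => (0:ℝ)) 0 (Ioi (0:ℝ)) 0 :=
        (hasDerivAt_const (0:ℝ) (0:ℝ)).hasDerivWithinAt
      have hd0 : -α - p * (-(α / β)) = 0 :=
        UniqueDiffWithinAt.eq_deriv _ (uniqueDiffWithinAt_Ioi 0) hW2 hW3
      rw [hβhalf] at hd0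
      have : α * (2 * p - 1) = 0 := by
        field_simp at hd0
        linarith
      rcases mul_eq_zero.mp this with h | h
      · exact absurd h (ne_of_gt hα)
      · linarith
    exact hne ⟨hβhalf, hphalf⟩
  -- main argument
  by_contra hcon
  push_neg at hcon
  obtain ⟨s, t, hst⟩ := hnc
  set T := -Real.log β with hT_def
  have hT : 0 < T := by rw [hT_def]; linarith
  have hperT : ∀ u : ℝ, ν (u + T) = ν u := by
    intro u
    have := hνper u
    rwa [abs_of_neg hlogβ] at this
  have hpern : ∀ (u : ℝ) (n : ℕ), ν (u - n * T) = ν u := by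
    intro u n
    induction n with
    | zero => simp
    | succ n ih =>
      rw [← ih, ← hperT (u - (n + 1 : ℕ) * T)]
      congr 1
      push_cast
      ring
  have hkey : ∀ a u : ℝ, ν (a + u) * ν 0 = ν a * ν u := by
    intro a u
    obtain ⟨L, hL⟩ := hcon (Real.exp a) (Real.exp_pos a)
    have hsub : ∀ u' : ℝ, Real.exp a ^ α * (ν (a + u') / ν u') = L := by
      intro u'
      have hbotseq : Tendsto (fun n : ℕ => u' - (n:ℝ) * T) atTop atBot := by
        have h1 : Tendsto (fun n : ℕ => (n:ℝ) * T) atTop atTop :=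
          tendsto_natCast_atTop_atTop.atTop_mul_const hT
        have h2 : Tendsto (fun n : ℕ => -((n:ℝ) * T)) atTop atBot :=
          tendsto_neg_atTop_atBot.comp h1
        have h3 := tendsto_atBot_add_const_left atTop u' h2
        refine h3.congr (fun n => ?_)
        ring
      have hseq : Tendsto (fun n : ℕ => Real.exp (u' - (n:ℝ) * T)) atTop (𝓝[>] (0:ℝ)) := by
        rw [tendsto_nhdsWithin_iff]
        exact ⟨Real.tendsto_exp_atBot.comp hbotseq,
          Eventually.of_forall (fun n => Real.exp_pos _)⟩
      have hcomp := hL.comp hseq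
      have h0' : Tendsto (fun n : ℕ => Real.exp (u' - (n:ℝ) * T)) atTop (𝓝 0) :=
        hseq.mono_right nhdsWithin_le_nhds
      have hεpos : (0:ℝ) < min 1 (Real.exp (-a)) := lt_min one_pos (Real.exp_pos _)
      have hsmall : ∀ᶠ n : ℕ in atTop,
          Real.exp (u' - (n:ℝ) * T) < min 1 (Real.exp (-a)) :=
        h0'.eventually_lt_const hεpos
      have hev : ((fun h : ℝ => (1 - F (1 - Real.exp a * h)) / (1 - F (1 - h))) ∘
          (fun n : ℕ => Real.exp (u' - (n:ℝ) * T))) =ᶠ[atTop]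
          (fun _ : ℕ => Real.exp a ^ α * (ν (a + u') / ν u')) := by
        filter_upwards [hsmall] with n hn
        simp only [Function.comp_apply]
        set h0 := Real.exp (u' - (n:ℝ) * T) with hh0
        have hh0pos : 0 < h0 := Real.exp_pos _
        have hh0le : h0 ≤ 1 := le_of_lt (lt_of_lt_of_le hn (min_le_left _ _))
        have hxh : Real.exp a * h0 ≤ 1 := by
          have h4 : h0 < Real.exp (-a) := lt_of_lt_of_le hn (min_le_right _ _)
          have h5 : Real.exp a * h0 ≤ Real.exp a * Real.exp (-a) := by
            nlinarith [Real.exp_pos a]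
          calc Real.exp a * h0 ≤ Real.exp a * Real.exp (-a) := h5
            _ = 1 := by rw [← Real.exp_add]; simp
        have hxh0 : 0 < Real.exp a * h0 := by positivity
        have e1 := hrep (Real.exp a * h0) hxh0 hxh
        have e2 := hrep h0 hh0pos hh0le
        have l1 : Real.log (Real.exp a * h0) = (a + u') - (n:ℝ) * T := by
          rw [Real.log_mul (Real.exp_ne_zero a) (ne_of_gt hh0pos), Real.log_exp,
            hh0, Real.log_exp]
          ring
        have l2 : Real.log h0 = u' - (n:ℝ) * T := by rw [hh0, Real.log_exp]
        have e1' : 1 - Real.exp a * h0 = 1 - Real.exp a * h0 := rfl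
        rw [e1, e2, l1, l2, hpern (a + u') n, hpern u' n,
          Real.mul_rpow (Real.exp_pos a).le hh0pos.le]
        have n1 : h0 ^ α ≠ 0 := ne_of_gt (Real.rpow_pos_of_pos hh0pos α)
        have n2 : ν u' ≠ 0 := ne_of_gt (hνpos u')
        field_simp
      have hconst : Tendsto (fun _ : ℕ => Real.exp a ^ α * (ν (a + u') / ν u'))
          atTop (𝓝 L) := hcomp.congr' hev
      exact (tendsto_nhds_unique tendsto_const_nhds hconst)
    have e1 := hsub u
    have e2 := hsub 0
    rw [add_zero] at e2
    have hxα : (0:ℝ) < Real.exp a ^ α := Real.rpow_pos_of_pos (Real.exp_pos a) α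
    have h3 : ν (a + u) / ν u = ν a / ν 0 :=
      mul_left_cancel₀ (ne_of_gt hxα) (e1.trans e2.symm)
    have hu : ν u ≠ 0 := ne_of_gt (hνpos u)
    have h0 : ν 0 ≠ 0 := ne_of_gt (hνpos 0)
    field_simp at h3
    linear_combination h3
  have hmul : ∀ a u : ℝ, ν (a + u) = ν a * ν u := by
    intro a u
    have := hkey a u
    rwa [hν0, mul_one] at this
  obtain ⟨M, hM⟩ := hνbdd
  have hle1 : ∀ u : ℝ, ν u ≤ 1 := by
    intro u
    by_contra hgt
    push_neg at hgt
    have hpow : ∀ n : ℕ, ν ((n:ℝ) * u) = ν u ^ n := by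
      intro n
      induction n with
      | zero => simpa using hν0
      | succ n ih =>
        have e : ((n:ℕ) + 1 : ℝ) * u = (n:ℝ) * u + u := by ring
        push_cast
        rw [add_mul, one_mul, hmul, ih, pow_succ]
    obtain ⟨n, hn⟩ := pow_unbounded_of_one_lt M hgt
    have := hM ((n:ℝ) * u)
    rw [hpow n] at this
    linarith
  have hge1 : ∀ u : ℝ, 1 ≤ ν u := by
    intro u
    have h := hmul u (-u)
    rw [add_neg_cancel, hν0] at h
    have h2 := hle1 (-u)
    have h3 := hνpos u
    nlinarith
  exact hst (by rw [le_antisymm (hle1 s) (hge1 s), le_antisymm (hle1 t) (hge1 t)])
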